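/- For positive real numbers p and q, there exists a strictly isomorphic rectangle partition pair for (p,q) of some finite size k if and only if p/q is rational. -/

import Mathlib

open scoped Classical

/-- An axis-parallel rectangle in the plane, given by its coordinates. -/
structure Rect where
  x1 : ℝ
  x2 : ℝ
  y1 : ℝ
  y2 : ℝ

namespace Rect

/-- The horizontal side length. -/
def width (r : Rect) : ℝ := r.x2 - r.x1

/-- The vertical side length. -/
def height (r : Rect) : ℝ := r.y2 - r.y1

/-- The closed rectangle as a set of points. -/
def carrier (r : Rect) : Set (ℝ × ℝ) := Set.Icc r.x1 r.x2 ×ˢ Set.Icc r.y1 r.y2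

/-- The interior of the rectangle. -/
def inner (r : Rect) : Set (ℝ × ℝ) := Set.Ioo r.x1 r.x2 ×ˢ Set.Ioo r.y1 r.y2

/-- The rectangle is nondegenerate. -/
def Nondeg (r : Rect) : Prop := r.x1 < r.x2 ∧ r.y1 < r.y2

end Rect

/-- `P` is a rectangle partition of `[0, W] × [0, H]`: finitely many nondegenerate
rectangles with pairwise disjoint interiors whose union is `[0, W] × [0, H]`. -/
def IsRectPartition {k : ℕ} (W H : ℝ) (P : Fin k → Rect) : Prop :=
  (∀ i, (P i).Nondeg) ∧
  (∀ i j : Fin k, i ≠ j → (P i).inner ∩ (P j).inner = ∅) ∧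
  (⋃ i, (P i).carrier) = Set.Icc (0 : ℝ) W ×ˢ Set.Icc (0 : ℝ) H

/-- `P1`, `P2`, `σ` form a strictly isomorphic rectangle partition pair between the
rectangles `a × b` and `c × d`: matched modules have equal width and equal height. -/
def IsStrictIsoPair (a b c d : ℝ) {k : ℕ} (P1 P2 : Fin k → Rect)
    (σ : Equiv.Perm (Fin k)) : Prop :=
  IsRectPartition a b P1 ∧ IsRectPartition c d P2 ∧
  ∀ i, (P1 i).width = (P2 (σ i)).width ∧ (P1 i).height = (P2 (σ i)).height

/-- There is a strictly isomorphic rectangle partition pair between `a × b` and `c × d`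
of size `k`. -/
def StrictPairGen (a b c d : ℝ) (k : ℕ) : Prop :=
  ∃ (P1 P2 : Fin k → Rect) (σ : Equiv.Perm (Fin k)), IsStrictIsoPair a b c d P1 P2 σ

/-- A strictly isomorphic rectangle partition pair for `(p, q)` of size `k`:
partitions of `[0,p] × [0,q]` and `[0,q] × [0,p]` with a matching preserving
widths and heights. -/
def StrictPair (p q : ℝ) (k : ℕ) : Prop := StrictPairGen p q q p k

/-- An isomorphic rectangle partition pair (rotation allowed) between `a × b` and
`c × d` of size `k`: matched modules have the same unordered pair of side lengths. -/
def IsoPairRot (a b c d : ℝ) (k : ℕ) : Prop :=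
  ∃ (P1 P2 : Fin k → Rect) (σ : Equiv.Perm (Fin k)),
    IsRectPartition a b P1 ∧ IsRectPartition c d P2 ∧
    ∀ i, ((P1 i).width = (P2 (σ i)).width ∧ (P1 i).height = (P2 (σ i)).height) ∨
         ((P1 i).width = (P2 (σ i)).height ∧ (P1 i).height = (P2 (σ i)).width)

/-- A slat rectangle partition: if horizontal sides of two modules lie on the same
horizontal line and overlap in more than one point, they are identical segments. -/
def IsSlat {k : ℕ} (P : Fin k → Rect) : Prop :=
  ∀ i j : Fin k, ∀ yi ∈ ({(P i).y1, (P i).y2} : Set ℝ),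
    ∀ yj ∈ ({(P j).y1, (P j).y2} : Set ℝ), yi = yj →
      max (P i).x1 (P j).x1 < min (P i).x2 (P j).x2 →
      (P i).x1 = (P j).x1 ∧ (P i).x2 = (P j).x2


/-! ### Auxiliary machinery for the proof -/

section Aux

/-- Step function: indicator of `a < x`. -/
noncomputable def stp (a x : ℝ) : ℝ := if a < x then 1 else 0

lemma stp_sum_eq_zero {ι : Type*} [Fintype ι] (c a : ι → ℝ)
    (h : ∀ x, ∑ j, c j * stp (a j) x = 0) (f : ℝ → ℝ) :
    ∑ j, c j * f (a j) = 0 := by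
  classical
  have key : ∀ v : ℝ, ∑ j ∈ Finset.univ.filter (fun j => a j = v), c j = 0 := by
    intro v
    obtain ⟨x, hvx, hx⟩ : ∃ x, v < x ∧ ∀ j, (a j < x ↔ a j ≤ v) := by
      set T := (Finset.univ.image a).filter (fun w => v < w) with hT
      by_cases hne : T.Nonempty
      · refine ⟨(v + T.min' hne) / 2, ?_, ?_⟩
        · have := (Finset.mem_filter.1 (T.min'_mem hne)).2
          linarith
        · intro j
          have hmin := (Finset.mem_filter.1 (T.min'_mem hne)).2
          constructor
          · intro hj
            by_contra hle
            push_neg at hle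
            have : a j ∈ T := Finset.mem_filter.2 ⟨Finset.mem_image_of_mem a (Finset.mem_univ j), hle⟩
            have := T.min'_le _ this
            linarith
          · intro hj; linarith
      · refine ⟨v + 1, by linarith, fun j => ?_⟩
        have : ¬ v < a j := by
          intro hvj
          exact hne ⟨a j, Finset.mem_filter.2 ⟨Finset.mem_image_of_mem a (Finset.mem_univ j), hvj⟩⟩
        push_neg at this
        constructor
        · intro _; exact this
        · intro _; linarith
    have h1 := h x
    have h2 := h v
    have : ∑ j, c j * (stp (a j) x - stp (a j) v) = 0 := by
      rw [Finset.sum_congr rfl (fun j _ => mul_sub (c j) _ _), Finset.sum_sub_distrib, h1, h2]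
      ring
    have heq : ∀ j, c j * (stp (a j) x - stp (a j) v) = if a j = v then c j else 0 := by
      intro j
      unfold stp
      rcases lt_trichotomy (a j) v with hlt | heq' | hgt
      · rw [if_pos ((hx j).2 hlt.le), if_pos hlt, if_neg (by linarith)]
        ring
      · rw [if_pos ((hx j).2 heq'.le), if_neg (by rw [heq']; exact lt_irrefl v), if_pos heq']
        ring
      · rw [if_neg (fun hc => absurd ((hx j).1 hc) (by push_neg; exact hgt)),
            if_neg (by linarith), if_neg (by linarith)]
        ring
    rw [Finset.sum_congr rfl (fun j _ => heq j)] at this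
    rwa [← Finset.sum_filter] at this
  calc ∑ j, c j * f (a j)
      = ∑ v ∈ Finset.univ.image a, ∑ j ∈ Finset.univ.filter (fun j => a j = v), c j * f (a j) :=
        (Finset.sum_fiberwise_of_maps_to (fun j _ => Finset.mem_image_of_mem a (Finset.mem_univ j)) _).symm
    _ = 0 := by
        apply Finset.sum_eq_zero
        intro v _
        have : ∑ j ∈ Finset.univ.filter (fun j => a j = v), c j * f (a j)
             = (∑ j ∈ Finset.univ.filter (fun j => a j = v), c j) * f v := by
          rw [Finset.sum_mul]
          apply Finset.sum_congr rfl
          intro j hj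
          rw [(Finset.mem_filter.1 hj).2]
        rw [this, key v, zero_mul]

lemma stp_diff {a b x : ℝ} (hab : a ≤ b) :
    stp a x - stp b x = if a < x ∧ x ≤ b then 1 else 0 := by
  unfold stp
  by_cases h1 : a < x <;> by_cases h2 : b < x <;> simp [h1, h2]
  · linarith

lemma sum_interval_rep {ι : Type*} [Fintype ι] (u v : ι → ℝ) (c : ι → ℝ) (U V C : ℝ)
    (h : ∀ x, ∑ i, c i * (stp (u i) x - stp (v i) x) = C * (stp U x - stp V x)) :
    ∀ f : ℝ → ℝ, ∑ i, c i * (f (v i) - f (u i)) = C * (f V - f U) := by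
  intro f
  set c' : ι × Bool ⊕ Bool → ℝ := fun j =>
    match j with
    | Sum.inl (i, true) => c i
    | Sum.inl (i, false) => - c i
    | Sum.inr true => - C
    | Sum.inr false => C with hc'
  set a' : ι × Bool ⊕ Bool → ℝ := fun j =>
    match j with
    | Sum.inl (i, true) => u i
    | Sum.inl (i, false) => v i
    | Sum.inr true => U
    | Sum.inr false => V with ha'
  have key : ∀ g : ℝ → ℝ, ∑ j, c' j * g (a' j) = 0 := by
    intro g
    apply stp_sum_eq_zero
    intro x
    rw [Fintype.sum_sum_type, Fintype.sum_prod_type]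
    simp only [Fintype.sum_bool, hc', ha']
    have := h x
    ring_nf
    ring_nf at this
    linarith [this]
  have := key f
  rw [Fintype.sum_sum_type, Fintype.sum_prod_type] at this
  simp only [Fintype.sum_bool, hc', ha'] at this
  have expand : ∑ i, (c i * f (u i) + - c i * f (v i)) = ∑ i, c i * f (u i) - ∑ i, c i * f (v i) := by
    rw [← Finset.sum_sub_distrib]; apply Finset.sum_congr rfl; intro i _; ring
  rw [expand] at this
  have : ∑ i, c i * f (u i) - ∑ i, c i * f (v i) + (-C * f U + C * f V) = 0 := this
  have goal : ∑ i, c i * (f (v i) - f (u i)) = ∑ i, c i * f (v i) - ∑ i, c i * f (u i) := by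
    rw [← Finset.sum_sub_distrib]; apply Finset.sum_congr rfl; intro i _; ring
  rw [goal]; linarith

/-- Half-open membership in a rectangle. -/
def HMem (r : Rect) (x y : ℝ) : Prop :=
  r.x1 < x ∧ x ≤ r.x2 ∧ r.y1 < y ∧ y ≤ r.y2

lemma rect_sub {k : ℕ} {W H : ℝ} {P : Fin k → Rect} (h : IsRectPartition W H P)
    (i : Fin k) : 0 ≤ (P i).x1 ∧ (P i).x2 ≤ W ∧ 0 ≤ (P i).y1 ∧ (P i).y2 ≤ H := by
  obtain ⟨hnd, -, hcov⟩ := h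
  have h1 : ((P i).x1, (P i).y1) ∈ (P i).carrier := by
    constructor <;> constructor <;> simp [le_refl, (hnd i).1.le, (hnd i).2.le]
  have h2 : ((P i).x2, (P i).y2) ∈ (P i).carrier := by
    constructor <;> constructor <;> simp [le_refl, (hnd i).1.le, (hnd i).2.le]
  have m1 : ((P i).x1, (P i).y1) ∈ Set.Icc (0:ℝ) W ×ˢ Set.Icc (0:ℝ) H := by
    rw [← hcov]; exact Set.mem_iUnion.2 ⟨i, h1⟩
  have m2 : ((P i).x2, (P i).y2) ∈ Set.Icc (0:ℝ) W ×ˢ Set.Icc (0:ℝ) H := by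
    rw [← hcov]; exact Set.mem_iUnion.2 ⟨i, h2⟩
  exact ⟨m1.1.1, m2.1.2, m1.2.1, m2.2.2⟩

lemma hmem_big {k : ℕ} {W H : ℝ} {P : Fin k → Rect} (h : IsRectPartition W H P)
    {i : Fin k} {x y : ℝ} (hm : HMem (P i) x y) : 0 < x ∧ x ≤ W ∧ 0 < y ∧ y ≤ H := by
  obtain ⟨a1, a2, a3, a4⟩ := rect_sub h i
  exact ⟨lt_of_le_of_lt a1 hm.1, hm.2.1.trans a2, lt_of_le_of_lt a3 hm.2.2.1, hm.2.2.2.trans a4⟩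

lemma hmem_exists_unique {k : ℕ} {W H : ℝ} {P : Fin k → Rect} (h : IsRectPartition W H P)
    {x y : ℝ} (hx : 0 < x) (hxW : x ≤ W) (hy : 0 < y) (hyH : y ≤ H) :
    ∃! i, HMem (P i) x y := by
  obtain ⟨hnd, hdisj, hcov⟩ := h
  set δ := min x y with hδ
  have hδpos : 0 < δ := lt_min hx hy
  have hcover : ∀ n : ℕ, ∃ i, (x - δ/(n+1), y - δ/(n+1)) ∈ (P i).carrier := by
    intro n
    have hfrac : 0 < δ/(n+1) := by positivity
    have hfle : δ/(n+1) ≤ δ := by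
      rw [div_le_iff₀ (by positivity)]
      nlinarith [Nat.cast_nonneg (α := ℝ) n]
    have : (x - δ/(n+1), y - δ/(n+1)) ∈ Set.Icc (0:ℝ) W ×ˢ Set.Icc (0:ℝ) H := by
      constructor <;> constructor <;> simp only []
      · have : δ ≤ x := min_le_left x y
        linarith
      · linarith
      · have : δ ≤ y := min_le_right x y
        linarith
      · linarith
    rw [← hcov] at this
    exact Set.mem_iUnion.1 this
  choose g hg using hcover
  obtain ⟨i0, hi0⟩ := Finite.exists_infinite_fiber g
  have hN : (g ⁻¹' {i0}).Infinite := Set.infinite_coe_iff.1 hi0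
  have hmemN : ∀ n ∈ g ⁻¹' {i0}, (x - δ/(n+1), y - δ/(n+1)) ∈ (P i0).carrier := by
    intro n hn
    have : g n = i0 := hn
    rw [← this]; exact hg n
  obtain ⟨n0, hn0⟩ := hN.nonempty
  have hb0 := hmemN n0 hn0
  have hfrac0 : 0 < δ/((n0:ℝ)+1) := by positivity
  have hub : ∀ ε > (0:ℝ), ∃ n ∈ g ⁻¹' {i0}, δ/((n:ℝ)+1) < ε := by
    intro ε hε
    obtain ⟨m, hm⟩ := exists_nat_gt (δ/ε)
    obtain ⟨n, hn, hnm⟩ := hN.exists_gt m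
    refine ⟨n, hn, ?_⟩
    rw [div_lt_iff₀ (by positivity)]
    rw [div_lt_iff₀ hε] at hm
    have : (m:ℝ) < n + 1 := by exact_mod_cast by omega
    nlinarith
  have hle2 : x ≤ (P i0).x2 := by
    by_contra hc
    push_neg at hc
    obtain ⟨n, hn, hlt⟩ := hub (x - (P i0).x2) (by linarith)
    have := (hmemN n hn).1.2
    simp only at this
    linarith
  have hle4 : y ≤ (P i0).y2 := by
    by_contra hc
    push_neg at hc
    obtain ⟨n, hn, hlt⟩ := hub (y - (P i0).y2) (by linarith)
    have := (hmemN n hn).2.2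
    simp only at this
    linarith
  have hm0 : HMem (P i0) x y := by
    refine ⟨?_, hle2, ?_, hle4⟩
    · have := hb0.1.1; simp only at this; linarith
    · have := hb0.2.1; simp only at this; linarith
  refine ⟨i0, hm0, ?_⟩
  intro j hj
  by_contra hne
  have hdis := hdisj j i0 hne
  set ε := min (min (x - (P j).x1) (x - (P i0).x1)) (min (y - (P j).y1) (y - (P i0).y1)) with hε
  have hεpos : 0 < ε := by
    apply lt_min <;> apply lt_min <;> linarith [hj.1, hm0.1, hj.2.2.1, hm0.2.2.1]
  have hz : (x - ε/2, y - ε/2) ∈ (P j).inner ∩ (P i0).inner := by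
    have e1 : ε ≤ x - (P j).x1 := (min_le_left _ _).trans (min_le_left _ _)
    have e2 : ε ≤ x - (P i0).x1 := (min_le_left _ _).trans (min_le_right _ _)
    have e3 : ε ≤ y - (P j).y1 := (min_le_right _ _).trans (min_le_left _ _)
    have e4 : ε ≤ y - (P i0).y1 := (min_le_right _ _).trans (min_le_right _ _)
    constructor <;> constructor <;> constructor <;> simp only [] <;>
      linarith [hj.2.1, hm0.2.1, hj.2.2.2, hm0.2.2.2]
  rw [hdis] at hz
  exact hz

lemma indicator_identity {k : ℕ} {W H : ℝ} (hW : 0 ≤ W) (hH : 0 ≤ H)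
    {P : Fin k → Rect} (h : IsRectPartition W H P) (x y : ℝ) :
    ∑ i, (stp (P i).x1 x - stp (P i).x2 x) * (stp (P i).y1 y - stp (P i).y2 y)
      = (stp 0 x - stp W x) * (stp 0 y - stp H y) := by
  have hmul : ∀ (A B : Prop) [Decidable A] [Decidable B],
      (if A then (1:ℝ) else 0) * (if B then 1 else 0) = if A ∧ B then 1 else 0 := by
    intro A B _ _
    split_ifs <;> simp_all
  have hterm : ∀ i, (stp (P i).x1 x - stp (P i).x2 x) * (stp (P i).y1 y - stp (P i).y2 y)
      = if HMem (P i) x y then 1 else 0 := by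
    intro i
    rw [stp_diff (h.1 i).1.le, stp_diff (h.1 i).2.le, hmul]
    exact if_congr (by unfold HMem; tauto) rfl rfl
  have hrhs : (stp 0 x - stp W x) * (stp 0 y - stp H y)
      = if (0 < x ∧ x ≤ W) ∧ (0 < y ∧ y ≤ H) then 1 else 0 := by
    rw [stp_diff hW, stp_diff hH, hmul]
  rw [Finset.sum_congr rfl (fun i _ => hterm i), hrhs]
  by_cases hbig : (0 < x ∧ x ≤ W) ∧ (0 < y ∧ y ≤ H)
  · rw [if_pos hbig]
    obtain ⟨i0, hi0, huniq⟩ := hmem_exists_unique h hbig.1.1 hbig.1.2 hbig.2.1 hbig.2.2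
    have : ∀ i, HMem (P i) x y ↔ i = i0 := fun i =>
      ⟨fun hi => huniq i hi, fun hi => hi ▸ hi0⟩
    rw [Finset.sum_congr rfl (fun i _ => if_congr (this i) rfl rfl)]
    simp
  · rw [if_neg hbig]
    apply Finset.sum_eq_zero
    intro i _
    rw [if_neg]
    intro hm
    obtain ⟨a, b, c, d⟩ := hmem_big h hm
    exact hbig ⟨⟨a, b⟩, ⟨c, d⟩⟩

lemma additivity {k : ℕ} {W H : ℝ} (hW : 0 ≤ W) (hH : 0 ≤ H)
    {P : Fin k → Rect} (h : IsRectPartition W H P) (f g : ℝ → ℝ) :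
    ∑ i, (f (P i).x2 - f (P i).x1) * (g (P i).y2 - g (P i).y1)
      = (f W - f 0) * (g H - g 0) := by
  have step1 : ∀ (f : ℝ → ℝ) (y : ℝ),
      ∑ i, (stp (P i).y1 y - stp (P i).y2 y) * (f (P i).x2 - f (P i).x1)
        = (stp 0 y - stp H y) * (f W - f 0) := by
    intro f y
    apply sum_interval_rep (fun i => (P i).x1) (fun i => (P i).x2) _ 0 W _ _ f
    intro x
    have := indicator_identity hW hH h x y
    calc ∑ i, (stp (P i).y1 y - stp (P i).y2 y) * (stp (P i).x1 x - stp (P i).x2 x)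
        = ∑ i, (stp (P i).x1 x - stp (P i).x2 x) * (stp (P i).y1 y - stp (P i).y2 y) := by
          apply Finset.sum_congr rfl; intro i _; ring
      _ = (stp 0 x - stp W x) * (stp 0 y - stp H y) := this
      _ = (stp 0 y - stp H y) * (stp 0 x - stp W x) := by ring
  apply sum_interval_rep (fun i => (P i).y1) (fun i => (P i).y2) _ 0 H _ _ g
  intro y
  calc ∑ i, (f (P i).x2 - f (P i).x1) * (stp (P i).y1 y - stp (P i).y2 y)
      = ∑ i, (stp (P i).y1 y - stp (P i).y2 y) * (f (P i).x2 - f (P i).x1) := by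
        apply Finset.sum_congr rfl; intro i _; ring
    _ = (stp 0 y - stp H y) * (f W - f 0) := step1 f y
    _ = (f W - f 0) * (stp 0 y - stp H y) := by ring

lemma exists_funcs {p q : ℝ} (hq : q ≠ 0) (hirr : Irrational (p / q)) :
    ∃ f g : ℝ →ₗ[ℚ] ℝ, f p = 1 ∧ f q = 0 ∧ g p = 0 ∧ g q = 1 := by
  have hpq : p ≠ q := by
    intro h
    apply hirr
    rw [h, div_self hq]
    exact ⟨1, by norm_num⟩
  have hli : LinearIndependent ℚ ![p, q] := by
    rw [LinearIndependent.pair_iff]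
    intro s t hst
    by_cases hs : s = 0
    · subst hs
      simp only [zero_smul, zero_add] at hst
      refine ⟨rfl, ?_⟩
      rcases smul_eq_zero.1 hst with h | h
      · exact h
      · exact absurd h hq
    · exfalso
      apply hirr
      refine ⟨-t/s, ?_⟩
      have hst' : (s:ℝ) * p + (t:ℝ) * q = 0 := by
        rw [Rat.smul_def, Rat.smul_def] at hst
        exact hst
      have hsR : (s:ℝ) ≠ 0 := by exact_mod_cast hs
      push_cast
      rw [div_eq_div_iff hsR hq]
      linarith
  have hli2 : LinearIndepOn ℚ id (Set.range ![p, q]) :=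
    hli.linearIndepOn_id
  have hpmem : p ∈ Set.range ![p, q] := ⟨0, rfl⟩
  have hqmem : q ∈ Set.range ![p, q] := ⟨1, rfl⟩
  have hpb : p ∈ hli2.extend (Set.subset_univ _) := hli2.subset_extend _ hpmem
  have hqb : q ∈ hli2.extend (Set.subset_univ _) := hli2.subset_extend _ hqmem
  set B := Module.Basis.extend hli2 with hB
  set ip : hli2.extend (Set.subset_univ _) := ⟨p, hpb⟩
  set iq : hli2.extend (Set.subset_univ _) := ⟨q, hqb⟩
  have hip : B ip = p := Module.Basis.extend_apply_self hli2 ip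
  have hiq : B iq = q := Module.Basis.extend_apply_self hli2 iq
  have hne : ip ≠ iq := by
    intro h
    exact hpq (congrArg Subtype.val h)
  have hrp : B.repr p = Finsupp.single ip 1 := by
    have := B.repr_self ip
    rwa [hip] at this
  have hrq : B.repr q = Finsupp.single iq 1 := by
    have := B.repr_self iq
    rwa [hiq] at this
  refine ⟨(Algebra.linearMap ℚ ℝ).comp (B.coord ip), (Algebra.linearMap ℚ ℝ).comp (B.coord iq),
    ?_, ?_, ?_, ?_⟩ <;>
    simp only [LinearMap.comp_apply, Module.Basis.coord_apply]
  · rw [hrp, Finsupp.single_eq_same]; simp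
  · rw [hrq, Finsupp.single_eq_of_ne' (Ne.symm hne)]; simp
  · rw [hrp, Finsupp.single_eq_of_ne' hne]; simp
  · rw [hrq, Finsupp.single_eq_same]; simp

/-- the grid of `a*b` squares of side `s` -/
noncomputable def gridRect (a : ℕ) (s : ℝ) (i : ℕ) : Rect :=
  ⟨(i % a : ℕ) * s, ((i % a : ℕ) + 1) * s, (i / a : ℕ) * s, ((i / a : ℕ) + 1) * s⟩

lemma interval_cover {a : ℕ} (ha : 0 < a) {s : ℝ} (hs : 0 < s) {x : ℝ}
    (h0 : 0 ≤ x) (h1 : x ≤ a * s) : ∃ r : ℕ, r < a ∧ (r:ℝ) * s ≤ x ∧ x ≤ ((r:ℝ) + 1) * s := by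
  set t := (⌊x / s⌋).toNat with ht
  have hfl : (0:ℤ) ≤ ⌊x / s⌋ := Int.le_floor.2 (by push_cast; positivity)
  have htr : ((t:ℕ) : ℝ) = ((⌊x / s⌋ : ℤ) : ℝ) := by
    rw [ht]
    exact_mod_cast congrArg (fun z : ℤ => (z:ℝ)) (Int.toNat_of_nonneg hfl)
  have hle : (t:ℝ) ≤ x / s := by rw [htr]; exact Int.floor_le _
  have hlt : x / s < (t:ℝ) + 1 := by rw [htr]; exact Int.lt_floor_add_one _
  have hts : (t:ℝ) * s ≤ x := by
    rw [le_div_iff₀ hs] at hle; exact hle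
  have hts2 : x < ((t:ℝ) + 1) * s := by
    rw [div_lt_iff₀ hs] at hlt; exact hlt
  by_cases hcase : t < a
  · exact ⟨t, hcase, hts, hts2.le⟩
  · push_neg at hcase
    have hta : (a:ℝ) ≤ (t:ℝ) := by exact_mod_cast hcase
    have hxeq : x = a * s := by nlinarith
    refine ⟨a - 1, by omega, ?_, ?_⟩
    · have : ((a - 1 : ℕ) : ℝ) = (a:ℝ) - 1 := by
        rw [Nat.cast_sub ha]; norm_num
      rw [this, hxeq]; nlinarith
    · have : ((a - 1 : ℕ) : ℝ) + 1 = (a:ℝ) := by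
        rw [Nat.cast_sub ha]; norm_num
      rw [this, hxeq]

lemma grid_partition (a b : ℕ) (ha : 0 < a) (hb : 0 < b) (s : ℝ) (hs : 0 < s) :
    IsRectPartition (a * s) (b * s) (fun i : Fin (a * b) => gridRect a s i.val) := by
  have hmod : ∀ i : Fin (a * b), i.val % a < a := fun i => Nat.mod_lt _ ha
  have hdiv : ∀ i : Fin (a * b), i.val / a < b := by
    intro i
    rw [Nat.div_lt_iff_lt_mul ha]
    calc i.val < a * b := i.isLt
      _ = b * a := Nat.mul_comm a b
  refine ⟨?_, ?_, ?_⟩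
  · intro i
    constructor <;> (simp only [gridRect]; nlinarith)
  · intro i j hij
    ext z
    simp only [Set.mem_inter_iff, Set.mem_empty_iff_false, iff_false]
    rintro ⟨⟨hz1, hz2⟩, ⟨hz3, hz4⟩⟩
    simp only [gridRect, Set.mem_Ioo] at hz1 hz2 hz3 hz4
    have hcol : i.val % a = j.val % a := by
      by_contra hne
      rcases Nat.lt_or_ge (i.val % a) (j.val % a) with hlt | hge
      · have : ((i.val % a : ℕ) : ℝ) + 1 ≤ ((j.val % a : ℕ) : ℝ) := by exact_mod_cast hlt
        nlinarith [hz1.2, hz3.1]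
      · have hlt' : j.val % a < i.val % a := by omega
        have : ((j.val % a : ℕ) : ℝ) + 1 ≤ ((i.val % a : ℕ) : ℝ) := by exact_mod_cast hlt'
        nlinarith [hz3.2, hz1.1]
    have hrow : i.val / a = j.val / a := by
      by_contra hne
      rcases Nat.lt_or_ge (i.val / a) (j.val / a) with hlt | hge
      · have : ((i.val / a : ℕ) : ℝ) + 1 ≤ ((j.val / a : ℕ) : ℝ) := by exact_mod_cast hlt
        nlinarith [hz2.2, hz4.1]
      · have hlt' : j.val / a < i.val / a := by omega
        have : ((j.val / a : ℕ) : ℝ) + 1 ≤ ((i.val / a : ℕ) : ℝ) := by exact_mod_cast hlt'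
        nlinarith [hz4.2, hz2.1]
    apply hij
    apply Fin.ext
    rw [← Nat.div_add_mod i.val a, ← Nat.div_add_mod j.val a, hcol, hrow]
  · ext z
    simp only [Set.mem_iUnion]
    constructor
    · rintro ⟨i, hzi⟩
      obtain ⟨⟨ha1, ha2⟩, ⟨hb1, hb2⟩⟩ := hzi
      simp only [gridRect] at ha1 ha2 hb1 hb2
      have h1 : ((i.val % a : ℕ) : ℝ) + 1 ≤ a := by exact_mod_cast hmod i
      have h2 : ((i.val / a : ℕ) : ℝ) + 1 ≤ b := by exact_mod_cast hdiv i
      constructor <;> constructor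
      · have : (0:ℝ) ≤ (i.val % a : ℕ) := Nat.cast_nonneg _
        nlinarith
      · nlinarith
      · have : (0:ℝ) ≤ (i.val / a : ℕ) := Nat.cast_nonneg _
        nlinarith
      · nlinarith
    · rintro ⟨⟨hx0, hxW⟩, ⟨hy0, hyH⟩⟩
      obtain ⟨r, hr, hr1, hr2⟩ := interval_cover ha hs hx0 hxW
      obtain ⟨c, hc, hc1, hc2⟩ := interval_cover hb hs hy0 hyH
      refine ⟨⟨a * c + r, ?_⟩, ?_⟩
      · calc a * c + r < a * c + a := by omega
          _ = a * (c + 1) := by ring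
          _ ≤ a * b := Nat.mul_le_mul_left a hc
      · have hm : (a * c + r) % a = r := by
          rw [Nat.mul_add_mod]
          exact Nat.mod_eq_of_lt hr
        have hd : (a * c + r) / a = c := by
          rw [Nat.mul_add_div ha, Nat.div_eq_of_lt hr]; omega
        constructor <;> constructor <;> simp only [gridRect, hm, hd] <;> assumption

lemma isRectPartition_reindex {k k' : ℕ} {W H : ℝ} (e : Fin k' ≃ Fin k)
    {P : Fin k → Rect} (h : IsRectPartition W H P) : IsRectPartition W H (P ∘ e) := by
  refine ⟨fun i => h.1 (e i), fun i j hij => h.2.1 _ _ (fun hc => hij (e.injective hc)), ?_⟩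
  rw [← h.2.2]
  exact e.surjective.iUnion_comp (fun i => (P i).carrier)

lemma gridRect_width (a : ℕ) (s : ℝ) (i : ℕ) : (gridRect a s i).width = s := by
  simp only [gridRect, Rect.width]; ring

lemma gridRect_height (a : ℕ) (s : ℝ) (i : ℕ) : (gridRect a s i).height = s := by
  simp only [gridRect, Rect.height]; ring

end Aux

/-- `SRTP(p,q)` has a solution of some finite size iff `p/q` is rational. -/
theorem srtp_solvable_iff_rational (p q : ℝ) (hp : 0 < p) (hq : 0 < q) :
    (∃ k : ℕ, StrictPair p q k) ↔ ¬ Irrational (p / q) := by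
  constructor
  · rintro ⟨k, P1, P2, σ, h1, h2, hm⟩ hirr
    obtain ⟨f, g, hfp, hfq, hgp, hgq⟩ := exists_funcs hq.ne' hirr
    have A1 := additivity hp.le hq.le h1 (fun x => f x) (fun x => g x)
    have A2 := additivity hq.le hp.le h2 (fun x => f x) (fun x => g x)
    have hterm : ∀ i, (f (P1 i).x2 - f (P1 i).x1) * (g (P1 i).y2 - g (P1 i).y1)
        = (f (P2 (σ i)).x2 - f (P2 (σ i)).x1) * (g (P2 (σ i)).y2 - g (P2 (σ i)).y1) := by
      intro i
      have hw : f (P1 i).x2 - f (P1 i).x1 = f (P2 (σ i)).x2 - f (P2 (σ i)).x1 := by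
        rw [← map_sub, ← map_sub]
        exact congrArg f ((hm i).1 : (P1 i).width = (P2 (σ i)).width)
      have hh : g (P1 i).y2 - g (P1 i).y1 = g (P2 (σ i)).y2 - g (P2 (σ i)).y1 := by
        rw [← map_sub, ← map_sub]
        exact congrArg g ((hm i).2 : (P1 i).height = (P2 (σ i)).height)
      rw [hw, hh]
    have hsum : ∑ i, (f (P1 i).x2 - f (P1 i).x1) * (g (P1 i).y2 - g (P1 i).y1)
        = ∑ i, (f (P2 i).x2 - f (P2 i).x1) * (g (P2 i).y2 - g (P2 i).y1) := by
      rw [Finset.sum_congr rfl (fun i _ => hterm i)]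
      exact Equiv.sum_comp σ (fun j => (f (P2 j).x2 - f (P2 j).x1) * (g (P2 j).y2 - g (P2 j).y1))
    rw [A1, A2] at hsum
    rw [hfp, hfq, hgp, hgq, map_zero, map_zero] at hsum
    norm_num at hsum
  · intro hrat
    rw [Irrational] at hrat
    push_neg at hrat
    obtain ⟨r, hr⟩ := hrat
    have hrpos : 0 < (r:ℝ) := by rw [hr]; positivity
    have hrpos' : 0 < r := by exact_mod_cast hrpos
    set m := r.num.toNat with hmdef
    set n := r.den with hndef
    have hm0 : 0 < m := by
      have := Rat.num_pos.2 hrpos'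
      omega
    have hn0 : 0 < n := r.pos
    set s := q / n with hsdef
    have hs : 0 < s := by positivity
    have hq_eq : q = n * s := by
      rw [hsdef]
      field_simp
    have hnum : ((m:ℕ):ℝ) = (r.num : ℝ) := by
      rw [hmdef]
      exact_mod_cast congrArg (fun z : ℤ => (z:ℝ)) (Int.toNat_of_nonneg (Rat.num_pos.2 hrpos').le)
    have hp_eq : p = m * s := by
      have h1 : p = (r:ℝ) * q := by
        rw [hr]; field_simp
      rw [h1, Rat.cast_def, hsdef, hnum]
      field_simp
      exact_mod_cast hndef
    refine ⟨m * n, ?_⟩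
    set P1 : Fin (m * n) → Rect := fun i => gridRect m s i.val with hP1
    set P2 : Fin (m * n) → Rect :=
      (fun i : Fin (n * m) => gridRect n s i.val) ∘ (finCongr (Nat.mul_comm m n)) with hP2
    refine ⟨P1, P2, Equiv.refl _, ?_, ?_, ?_⟩
    · rw [hp_eq, hq_eq]
      exact grid_partition m n hm0 hn0 s hs
    · rw [hq_eq, hp_eq]
      exact isRectPartition_reindex (finCongr (Nat.mul_comm m n))
        (grid_partition n m hn0 hm0 s hs)
    · intro i
      simp only [hP1, hP2, Equiv.refl_apply, Function.comp_apply,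
        gridRect_width, gridRect_height]
      exact ⟨trivial, trivial⟩
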